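/- Every eigenvalue λ of problem (P) satisfies Re(λ) ≤ 0. -/

import Mathlib

open Set Complex

/-- An eigenpair of problem (P): `w` is a nonzero `C⁴` function on `[0,1]`
satisfying the ODE `w'''' − (γ−η²)w'' + 2λβη w' + λ²w = 0` together with the
boundary conditions `w(0) = w''(0) = 0`, `w''(1) + λκ w'(1) = 0`,
`w'''(1) − (γ−η²) w'(1) = 0`. -/
def IsEigenpairP (β η γ κ : ℝ) (l : ℂ) (w : ℝ → ℂ) : Prop :=
  ContDiff ℝ 4 w ∧ (∃ s ∈ Icc (0:ℝ) 1, w s ≠ 0) ∧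
  (∀ s ∈ Icc (0:ℝ) 1,
    iteratedDeriv 4 w s - ((γ - η^2 : ℝ) : ℂ) * iteratedDeriv 2 w s
      + 2 * l * ((β * η : ℝ) : ℂ) * deriv w s + l^2 * w s = 0) ∧
  w 0 = 0 ∧ iteratedDeriv 2 w 0 = 0 ∧
  iteratedDeriv 2 w 1 + l * ((κ : ℝ) : ℂ) * deriv w 1 = 0 ∧
  iteratedDeriv 3 w 1 - ((γ - η^2 : ℝ) : ℂ) * deriv w 1 = 0

/-- An eigenvalue of problem (P). -/
def IsEigenvalueP (β η γ κ : ℝ) (l : ℂ) : Prop :=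
  ∃ w : ℝ → ℂ, IsEigenpairP β η γ κ l w

open MeasureTheory intervalIntegral in
/-- Integration by parts on `[0,1]` for globally differentiable functions. -/
private lemma ibp_aux {g h g' h' : ℝ → ℂ}
    (hg : ∀ s, HasDerivAt g (g' s) s) (hh : ∀ s, HasDerivAt h (h' s) s)
    (hg' : Continuous g') (hh' : Continuous h') :
    (∫ s in (0:ℝ)..1, g' s * h s)
      = g 1 * h 1 - g 0 * h 0 - ∫ s in (0:ℝ)..1, g s * h' s := by
  have hgc : Continuous g := continuous_iff_continuousAt.2 fun s => (hg s).continuousAt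
  have hhc : Continuous h := continuous_iff_continuousAt.2 fun s => (hh s).continuousAt
  have key := intervalIntegral.integral_deriv_mul_eq_sub_of_hasDerivAt
      (u := g) (v := h) (u' := g') (v' := h') (a := 0) (b := 1)
      hgc.continuousOn hhc.continuousOn (fun s _ => hg s) (fun s _ => hh s)
      (hg'.intervalIntegrable 0 1) (hh'.intervalIntegrable 0 1)
  rw [intervalIntegral.integral_add (f := fun x => g' x * h x) (g := fun x => g x * h' x)
      ((hg'.mul hhc).intervalIntegrable 0 1)
      ((hgc.mul hh').intervalIntegrable 0 1)] at key
  linear_combination key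

open MeasureTheory intervalIntegral in
private lemma intervalIntegral_conj' {f : ℝ → ℂ} :
    (∫ s in (0:ℝ)..1, (starRingEnd ℂ) (f s)) = (starRingEnd ℂ) (∫ s in (0:ℝ)..1, f s) := by
  rw [intervalIntegral.integral_of_le zero_le_one, intervalIntegral.integral_of_le zero_le_one,
    ← integral_conj]

open MeasureTheory intervalIntegral in
private lemma integral_normSq_pos {w : ℝ → ℂ} (hw : Continuous w) {s₀ : ℝ}
    (hs : s₀ ∈ Icc (0:ℝ) 1) (hne : w s₀ ≠ 0) :
    0 < ∫ s in (0:ℝ)..1, Complex.normSq (w s) := by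
  have hfc : Continuous fun s => Complex.normSq (w s) := Complex.continuous_normSq.comp hw
  have hfi := hfc.intervalIntegrable (μ := volume) 0 1
  rw [intervalIntegral.integral_pos_iff_support_of_nonneg_ae
      (Filter.Eventually.of_forall fun s => Complex.normSq_nonneg _) hfi]
  refine ⟨one_pos, ?_⟩
  have hopen : IsOpen (Function.support fun s => Complex.normSq (w s)) := by
    have hh : (Function.support fun s => Complex.normSq (w s))
        = (fun s => Complex.normSq (w s)) ⁻¹' {0}ᶜ := by
      ext t; simp [Function.mem_support]
    rw [hh]
    exact isOpen_compl_singleton.preimage hfc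
  have hmem : s₀ ∈ Function.support fun s => Complex.normSq (w s) := by
    simp only [Function.mem_support, ne_eq, Complex.normSq_eq_zero]
    exact hne
  obtain ⟨ε, hε, hball⟩ := Metric.isOpen_iff.1 hopen s₀ hmem
  have hsub : Ioo (max (s₀ - ε) 0) (min (s₀ + ε) 1)
      ⊆ (Function.support fun s => Complex.normSq (w s)) ∩ Ioc 0 1 := by
    intro t ht
    obtain ⟨ht1, ht2⟩ := ht
    refine ⟨hball ?_, lt_of_le_of_lt (le_max_right _ _) ht1,
      le_of_lt (lt_of_lt_of_le ht2 (min_le_right _ _))⟩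
    rw [Real.ball_eq_Ioo]
    exact ⟨lt_of_le_of_lt (le_max_left _ _) ht1, lt_of_lt_of_le ht2 (min_le_left _ _)⟩
  refine lt_of_lt_of_le ?_ (measure_mono hsub)
  rw [Real.volume_Ioo]
  apply ENNReal.ofReal_pos.2
  have h1 : max (s₀ - ε) 0 < min (s₀ + ε) 1 :=
    max_lt (lt_min (by linarith) (by linarith [hs.2])) (lt_min (by linarith [hs.1]) one_pos)
  linarith

open MeasureTheory intervalIntegral in
/-- every eigenvalue of problem (P) lies in the closed left
half-plane. -/
theorem eigenvalue_re_nonpos (β η γ κ : ℝ) (hβ : β ∈ Ioo (0:ℝ) 1) (hη : 0 ≤ η)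
    (hκ : 0 ≤ κ) (hγ : η^2 < γ) (l : ℂ)
    (h : IsEigenvalueP β η γ κ l) : l.re ≤ 0 := by
  obtain ⟨w, hw4, ⟨s₀, hs₀, hws₀⟩, hode, hw0, hw20, hbc1, hbc2⟩ := h
  simp only [← iteratedDeriv_one] at hode hbc1 hbc2
  have hwc : Continuous w := hw4.continuous
  have hcont : ∀ k : ℕ, k ≤ 4 → Continuous (iteratedDeriv k w) := fun k hk =>
    hw4.continuous_iteratedDeriv k (by exact_mod_cast hk)
  have hD : ∀ k : ℕ, k < 4 → ∀ s : ℝ,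
      HasDerivAt (iteratedDeriv k w) (iteratedDeriv (k+1) w s) s := by
    intro k hk s
    rw [iteratedDeriv_succ]
    exact ((hw4.differentiable_iteratedDeriv k (by exact_mod_cast hk)) s).hasDerivAt
  have hDw : ∀ s : ℝ, HasDerivAt w (iteratedDeriv 1 w s) s := by
    intro s
    simpa [iteratedDeriv_zero] using hD 0 (by norm_num) s
  have hDcw : ∀ s : ℝ, HasDerivAt (fun t => (starRingEnd ℂ) (w t))
      ((starRingEnd ℂ) (iteratedDeriv 1 w s)) s := by
    intro s
    simpa only [starRingEnd_apply] using (hDw s).star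
  have hDcw1 : ∀ s : ℝ, HasDerivAt (fun t => (starRingEnd ℂ) (iteratedDeriv 1 w t))
      ((starRingEnd ℂ) (iteratedDeriv 2 w s)) s := by
    intro s
    simpa only [starRingEnd_apply] using (hD 1 (by norm_num) s).star
  have hcwc : Continuous fun t => (starRingEnd ℂ) (w t) := by
    simpa only [starRingEnd_apply] using hwc.star
  have hcw1c : Continuous fun t => (starRingEnd ℂ) (iteratedDeriv 1 w t) := by
    simpa only [starRingEnd_apply] using (hcont 1 (by norm_num)).star
  have hcw2c : Continuous fun t => (starRingEnd ℂ) (iteratedDeriv 2 w t) := by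
    simpa only [starRingEnd_apply] using (hcont 2 (by norm_num)).star
  -- integration by parts identities
  have E1 := ibp_aux (g := iteratedDeriv 3 w) (g' := iteratedDeriv 4 w)
      (h := fun t => (starRingEnd ℂ) (w t)) (h' := fun t => (starRingEnd ℂ) (iteratedDeriv 1 w t))
      (hD 3 (by norm_num)) hDcw (hcont 4 le_rfl) hcw1c
  have E2 := ibp_aux (g := iteratedDeriv 2 w) (g' := iteratedDeriv 3 w)
      (h := fun t => (starRingEnd ℂ) (iteratedDeriv 1 w t))
      (h' := fun t => (starRingEnd ℂ) (iteratedDeriv 2 w t))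
      (hD 2 (by norm_num)) hDcw1 (hcont 3 (by norm_num)) hcw2c
  have E3 := ibp_aux (g := iteratedDeriv 1 w) (g' := iteratedDeriv 2 w)
      (h := fun t => (starRingEnd ℂ) (w t)) (h' := fun t => (starRingEnd ℂ) (iteratedDeriv 1 w t))
      (hD 1 (by norm_num)) hDcw (hcont 2 (by norm_num)) hcw1c
  have E4 := ibp_aux (g := w) (g' := iteratedDeriv 1 w)
      (h := fun t => (starRingEnd ℂ) (w t)) (h' := fun t => (starRingEnd ℂ) (iteratedDeriv 1 w t))
      hDw hDcw (hcont 1 (by norm_num)) hcw1c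
  beta_reduce at E1 E2 E3 E4
  have hw0c : (starRingEnd ℂ) (w 0) = 0 := by rw [hw0, map_zero]
  -- the integral of the ODE against conj w vanishes
  have hzero : (∫ s in (0:ℝ)..1,
      (iteratedDeriv 4 w s - ((γ - η^2 : ℝ) : ℂ) * iteratedDeriv 2 w s
        + 2 * l * ((β * η : ℝ) : ℂ) * iteratedDeriv 1 w s + l^2 * w s)
        * (starRingEnd ℂ) (w s)) = 0 := by
    have heq : EqOn (fun s => (iteratedDeriv 4 w s - ((γ - η^2 : ℝ) : ℂ) * iteratedDeriv 2 w s
        + 2 * l * ((β * η : ℝ) : ℂ) * iteratedDeriv 1 w s + l^2 * w s)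
        * (starRingEnd ℂ) (w s)) (fun _ => (0:ℂ)) (uIcc (0:ℝ) 1) := by
      intro s hs
      rw [uIcc_of_le zero_le_one] at hs
      simp only
      rw [hode s hs, zero_mul]
    rw [intervalIntegral.integral_congr heq]
    simp
  -- split the integral by linearity
  have h4i : IntervalIntegrable (fun s => iteratedDeriv 4 w s * (starRingEnd ℂ) (w s))
      volume 0 1 := ((hcont 4 le_rfl).mul hcwc).intervalIntegrable _ _
  have h2i : IntervalIntegrable (fun s => iteratedDeriv 2 w s * (starRingEnd ℂ) (w s))
      volume 0 1 := ((hcont 2 (by norm_num)).mul hcwc).intervalIntegrable _ _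
  have h1i : IntervalIntegrable (fun s => iteratedDeriv 1 w s * (starRingEnd ℂ) (w s))
      volume 0 1 := ((hcont 1 (by norm_num)).mul hcwc).intervalIntegrable _ _
  have h0i : IntervalIntegrable (fun s => w s * (starRingEnd ℂ) (w s))
      volume 0 1 := (hwc.mul hcwc).intervalIntegrable _ _
  have hexp : (∫ s in (0:ℝ)..1,
      (iteratedDeriv 4 w s - ((γ - η^2 : ℝ) : ℂ) * iteratedDeriv 2 w s
        + 2 * l * ((β * η : ℝ) : ℂ) * iteratedDeriv 1 w s + l^2 * w s)
        * (starRingEnd ℂ) (w s))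
      = (∫ s in (0:ℝ)..1, iteratedDeriv 4 w s * (starRingEnd ℂ) (w s))
        - ((γ - η^2 : ℝ) : ℂ) * (∫ s in (0:ℝ)..1, iteratedDeriv 2 w s * (starRingEnd ℂ) (w s))
        + (2 * l * ((β * η : ℝ) : ℂ))
            * (∫ s in (0:ℝ)..1, iteratedDeriv 1 w s * (starRingEnd ℂ) (w s))
        + l^2 * (∫ s in (0:ℝ)..1, w s * (starRingEnd ℂ) (w s)) := by
    rw [show (fun s : ℝ => (iteratedDeriv 4 w s - ((γ - η^2 : ℝ) : ℂ) * iteratedDeriv 2 w s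
        + 2 * l * ((β * η : ℝ) : ℂ) * iteratedDeriv 1 w s + l^2 * w s)
        * (starRingEnd ℂ) (w s))
        = fun s : ℝ => (iteratedDeriv 4 w s * (starRingEnd ℂ) (w s)
            - ((γ - η^2 : ℝ) : ℂ) * (iteratedDeriv 2 w s * (starRingEnd ℂ) (w s)))
          + ((2 * l * ((β * η : ℝ) : ℂ)) * (iteratedDeriv 1 w s * (starRingEnd ℂ) (w s))
            + l^2 * (w s * (starRingEnd ℂ) (w s)))
        from funext fun s => by ring]
    rw [intervalIntegral.integral_add (h4i.sub (h2i.const_mul _))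
        ((h1i.const_mul _).add (h0i.const_mul _)),
      intervalIntegral.integral_sub h4i (h2i.const_mul _),
      intervalIntegral.integral_add (h1i.const_mul _) (h0i.const_mul _),
      intervalIntegral.integral_const_mul, intervalIntegral.integral_const_mul,
      intervalIntegral.integral_const_mul]
    ring
  rw [hexp] at hzero
  -- nonnegativity of the real part of J
  have hconjJ : (starRingEnd ℂ) (∫ s in (0:ℝ)..1, iteratedDeriv 1 w s * (starRingEnd ℂ) (w s))
      = ∫ s in (0:ℝ)..1, w s * (starRingEnd ℂ) (iteratedDeriv 1 w s) := by
    rw [← intervalIntegral_conj']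
    apply intervalIntegral.integral_congr
    intro s _
    simp only [map_mul, Complex.conj_conj]
    ring
  have h2re : 2 * (∫ s in (0:ℝ)..1, iteratedDeriv 1 w s * (starRingEnd ℂ) (w s)).re
      = Complex.normSq (w 1) := by
    have hsum : (∫ s in (0:ℝ)..1, iteratedDeriv 1 w s * (starRingEnd ℂ) (w s))
        + (starRingEnd ℂ) (∫ s in (0:ℝ)..1, iteratedDeriv 1 w s * (starRingEnd ℂ) (w s))
        = ((Complex.normSq (w 1) : ℝ) : ℂ) := by
      rw [hconjJ, ← Complex.mul_conj]
      linear_combination E4 - (starRingEnd ℂ) (w 0) * hw0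
    have h' := congrArg Complex.re hsum
    simp only [Complex.add_re, Complex.conj_re, Complex.ofReal_re] at h'
    linarith
  have hReJ : 0 ≤ (∫ s in (0:ℝ)..1, iteratedDeriv 1 w s * (starRingEnd ℂ) (w s)).re := by
    have := Complex.normSq_nonneg (w 1)
    linarith
  -- real representations
  have hA : (∫ s in (0:ℝ)..1, w s * (starRingEnd ℂ) (w s))
      = ((∫ s in (0:ℝ)..1, Complex.normSq (w s) : ℝ) : ℂ) := by
    rw [← intervalIntegral.integral_ofReal]
    exact intervalIntegral.integral_congr fun s _ => Complex.mul_conj _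
  have hK1 : (∫ s in (0:ℝ)..1, iteratedDeriv 1 w s * (starRingEnd ℂ) (iteratedDeriv 1 w s))
      = ((∫ s in (0:ℝ)..1, Complex.normSq (iteratedDeriv 1 w s) : ℝ) : ℂ) := by
    rw [← intervalIntegral.integral_ofReal]
    exact intervalIntegral.integral_congr fun s _ => Complex.mul_conj _
  have hK2 : (∫ s in (0:ℝ)..1, iteratedDeriv 2 w s * (starRingEnd ℂ) (iteratedDeriv 2 w s))
      = ((∫ s in (0:ℝ)..1, Complex.normSq (iteratedDeriv 2 w s) : ℝ) : ℂ) := by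
    rw [← intervalIntegral.integral_ofReal]
    exact intervalIntegral.integral_congr fun s _ => Complex.mul_conj _
  -- intermediate identities
  have hI4eq : (∫ s in (0:ℝ)..1, iteratedDeriv 4 w s * (starRingEnd ℂ) (w s))
      = ((γ - η^2 : ℝ) : ℂ) * (iteratedDeriv 1 w 1 * (starRingEnd ℂ) (w 1))
        + l * ((κ : ℝ) : ℂ) * (iteratedDeriv 1 w 1 * (starRingEnd ℂ) (iteratedDeriv 1 w 1))
        + (∫ s in (0:ℝ)..1, iteratedDeriv 2 w s * (starRingEnd ℂ) (iteratedDeriv 2 w s)) := by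
    linear_combination E1 - E2 + (starRingEnd ℂ) (w 1) * hbc2
      - (starRingEnd ℂ) (iteratedDeriv 1 w 1) * hbc1
      - iteratedDeriv 3 w 0 * hw0c + (starRingEnd ℂ) (iteratedDeriv 1 w 0) * hw20
  have hI2eq : (∫ s in (0:ℝ)..1, iteratedDeriv 2 w s * (starRingEnd ℂ) (w s))
      = iteratedDeriv 1 w 1 * (starRingEnd ℂ) (w 1)
        - (∫ s in (0:ℝ)..1, iteratedDeriv 1 w s * (starRingEnd ℂ) (iteratedDeriv 1 w s)) := by
    linear_combination E3 - iteratedDeriv 1 w 0 * hw0c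
  -- the main complex identity
  have hmain : l^2 * ((∫ s in (0:ℝ)..1, Complex.normSq (w s) : ℝ) : ℂ)
      + l * ((κ : ℝ) : ℂ) * ((Complex.normSq (iteratedDeriv 1 w 1) : ℝ) : ℂ)
      + 2 * l * ((β * η : ℝ) : ℂ)
          * (∫ s in (0:ℝ)..1, iteratedDeriv 1 w s * (starRingEnd ℂ) (w s))
      + (((∫ s in (0:ℝ)..1, Complex.normSq (iteratedDeriv 2 w s) : ℝ) : ℂ)
        + ((γ - η^2 : ℝ) : ℂ)
            * ((∫ s in (0:ℝ)..1, Complex.normSq (iteratedDeriv 1 w s) : ℝ) : ℂ)) = 0 := by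
    rw [← hA, ← hK1, ← hK2, ← Complex.mul_conj]
    linear_combination hzero - hI4eq + ((γ - η^2 : ℝ) : ℂ) * hI2eq
  -- pass to real and imaginary parts
  set a : ℝ := ∫ s in (0:ℝ)..1, Complex.normSq (w s) with hadef
  set k1 : ℝ := ∫ s in (0:ℝ)..1, Complex.normSq (iteratedDeriv 1 w s) with hk1def
  set k2 : ℝ := ∫ s in (0:ℝ)..1, Complex.normSq (iteratedDeriv 2 w s) with hk2def
  set m : ℝ := Complex.normSq (iteratedDeriv 1 w 1) with hmdef
  set J : ℂ := ∫ s in (0:ℝ)..1, iteratedDeriv 1 w s * (starRingEnd ℂ) (w s) with hJdef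
  have ha : 0 < a := by rw [hadef]; exact integral_normSq_pos hwc hs₀ hws₀
  have hk1n : 0 ≤ k1 := by
    rw [hk1def]
    exact intervalIntegral.integral_nonneg zero_le_one fun u _ => Complex.normSq_nonneg _
  have hk2n : 0 ≤ k2 := by
    rw [hk2def]
    exact intervalIntegral.integral_nonneg zero_le_one fun u _ => Complex.normSq_nonneg _
  have hmn : 0 ≤ m := by rw [hmdef]; exact Complex.normSq_nonneg _
  have hre := congrArg Complex.re hmain
  have him := congrArg Complex.im hmain
  simp only [pow_two, Complex.add_re, Complex.add_im, Complex.mul_re, Complex.mul_im,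
    Complex.ofReal_re, Complex.ofReal_im, Complex.zero_re, Complex.zero_im,
    Complex.re_ofNat, Complex.im_ofNat] at hre him
  by_contra hx
  push_neg at hx
  have hcomb : a * l.re^3 + a * l.re * l.im^2 + κ * m * l.re^2 + κ * m * l.im^2
      + 2 * (β * η) * J.re * (l.re^2 + l.im^2) + (k2 + (γ - η^2) * k1) * l.re = 0 := by
    linear_combination l.re * hre + l.im * him
  have t1 : 0 < a * l.re^3 := mul_pos ha (pow_pos hx 3)
  have t2 : 0 ≤ a * l.re * l.im^2 := mul_nonneg (mul_nonneg ha.le hx.le) (sq_nonneg _)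
  have t3 : 0 ≤ κ * m * l.re^2 := mul_nonneg (mul_nonneg hκ hmn) (sq_nonneg _)
  have t4 : 0 ≤ κ * m * l.im^2 := mul_nonneg (mul_nonneg hκ hmn) (sq_nonneg _)
  have t5 : 0 ≤ 2 * (β * η) * J.re * (l.re^2 + l.im^2) :=
    mul_nonneg (mul_nonneg (mul_nonneg (by norm_num) (mul_nonneg hβ.1.le hη)) hReJ)
      (add_nonneg (sq_nonneg _) (sq_nonneg _))
  have t6 : 0 ≤ (k2 + (γ - η^2) * k1) * l.re :=
    mul_nonneg (add_nonneg hk2n (mul_nonneg (by linarith) hk1n)) hx.le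
  linarith
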